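/- arXiv:2205.11418 — 8 statements merged into one kernel-verified Lean document; each statement's English description precedes it below -/
import Mathlib

section
/- Let n and i be positive integers with gcd(2i, n) = gcd(i, n). Then the map g : F_{2^n} → F_{2^n} given by g(x) = x^{2^i + 1} is a permutation of F_{2^n}. -/
lemma key_coprime (n i : ℕ) (hn : 0 < n) (hi : 0 < i)
    (h : Nat.gcd (2 * i) n = Nat.gcd i n) :
    Nat.Coprime (2 ^ i + 1) (2 ^ n - 1) := by
  set d := Nat.gcd (2 ^ i + 1) (2 ^ n - 1) with hd
  have hd1 : d ∣ 2 ^ i + 1 := Nat.gcd_dvd_left _ _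
  have hd2 : d ∣ 2 ^ n - 1 := Nat.gcd_dvd_right _ _
  have hdne : d ≠ 0 := (Nat.gcd_pos_of_pos_left _ (by positivity)).ne'
  haveI : NeZero d := ⟨hdne⟩
  -- d is odd
  have hodd : ¬ 2 ∣ d := by
    intro h2
    have : 2 ∣ 2 ^ n - 1 := h2.trans hd2
    have h2n : 2 ∣ 2 ^ n := dvd_pow_self 2 hn.ne'
    have : (1 : ℕ) ≤ 2 ^ n := Nat.one_le_two_pow
    omega
  -- in ZMod d:
  have h1 : (2 : ZMod d) ^ i = -1 := by
    have : ((2 ^ i + 1 : ℕ) : ZMod d) = 0 := (ZMod.natCast_eq_zero_iff _ _).2 hd1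
    push_cast at this
    linear_combination this
  have h2 : (2 : ZMod d) ^ n = 1 := by
    have : ((2 ^ n - 1 : ℕ) : ZMod d) = 0 := (ZMod.natCast_eq_zero_iff _ _).2 hd2
    rw [Nat.cast_sub Nat.one_le_two_pow] at this
    push_cast at this
    linear_combination this
  have h2i : (2 : ZMod d) ^ (2 * i) = 1 := by
    rw [mul_comm, pow_mul, h1]
    ring
  have ho1 : orderOf (2 : ZMod d) ∣ 2 * i := orderOf_dvd_of_pow_eq_one h2i
  have ho2 : orderOf (2 : ZMod d) ∣ n := orderOf_dvd_of_pow_eq_one h2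
  have ho : orderOf (2 : ZMod d) ∣ i :=
    (Nat.dvd_gcd ho1 ho2).trans (h ▸ Nat.gcd_dvd_left i n)
  have hpi : (2 : ZMod d) ^ i = 1 := orderOf_dvd_iff_pow_eq_one.1 ho
  have : (2 : ZMod d) = 0 := by
    have h11 : (1 : ZMod d) = -1 := hpi.symm.trans h1
    linear_combination h11
  have : d ∣ 2 := by
    have := (ZMod.natCast_eq_zero_iff 2 d).1 (by exact_mod_cast this)
    exact this
  rcases (Nat.dvd_prime Nat.prime_two).1 this with h1 | h2
  · exact h1
  · exact absurd (h2 ▸ dvd_refl d) hodd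

/-- if `gcd(2i, n) = gcd(i, n)`, then `x ↦ x^{2^i+1}` is a
permutation of `F_{2^n}`. -/
theorem stmt1 (n i : ℕ) (hn : 0 < n) (hi : 0 < i)
    (h : Nat.gcd (2 * i) n = Nat.gcd i n) :
    Function.Bijective (fun x : GaloisField 2 n => x ^ (2 ^ i + 1)) := by
  haveI : Fintype (GaloisField 2 n) := Fintype.ofFinite _
  have hcard : Fintype.card (GaloisField 2 n) = 2 ^ n := by
    rw [← Nat.card_eq_fintype_card, GaloisField.card 2 n hn.ne']
  have hcop := key_coprime n i hn hi h
  rw [Finite.injective_iff_bijective.symm]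
  intro x y hxy
  simp only at hxy
  by_cases hx : x = 0
  · subst hx
    rw [zero_pow (by positivity)] at hxy
    exact ((pow_eq_zero_iff (by positivity)).1 hxy.symm).symm
  · have hy : y ≠ 0 := by
      intro hy0
      subst hy0
      rw [zero_pow (by positivity)] at hxy
      exact hx ((pow_eq_zero_iff (by positivity)).1 hxy)
    have hz : (x / y) ^ (2 ^ i + 1) = 1 := by
      rw [div_pow, hxy, div_self (pow_ne_zero _ hy)]
    have hzo : orderOf (x / y) ∣ 2 ^ i + 1 := orderOf_dvd_of_pow_eq_one hz
    have hzc : (x / y) ^ (2 ^ n - 1) = 1 := by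
      rw [← hcard]
      exact FiniteField.pow_card_sub_one_eq_one _ (div_ne_zero hx hy)
    have hzo2 : orderOf (x / y) ∣ 2 ^ n - 1 := orderOf_dvd_of_pow_eq_one hzc
    have : orderOf (x / y) ∣ 1 := hcop ▸ Nat.dvd_gcd hzo hzo2
    have : x / y = 1 := orderOf_eq_one_iff.1 (Nat.dvd_one.1 this)
    field_simp at this
    exact this
end

section
/- Let n be an even positive integer and let i be a positive integer. Then the map h : F_{2^n} → F_{2^n} given by h(x) = x + tr(x^{2^i+1}) is an involution, i.e., h(h(x)) = x for all x ∈ F_{2^n}. -/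
/-- The absolute trace from `F_{2^n}` to its prime field, computed inside the field. -/
noncomputable def aTr {K : Type} [CommRing K] (n : ℕ) (x : K) : K :=
  ∑ k ∈ Finset.range n, x ^ 2 ^ k

section aux

variable {K : Type} [Field K] [CharP K 2] (n : ℕ)

lemma aTr_add (a b : K) : aTr n (a + b) = aTr n a + aTr n b := by
  simp only [aTr, ← Finset.sum_add_distrib]
  exact Finset.sum_congr rfl fun k _ => add_pow_char_pow ..

lemma aTr_sq_eq (a : K) : aTr n (a ^ 2) = (aTr n a) ^ 2 := by
  simp only [aTr]
  rw [sum_pow_char]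
  exact Finset.sum_congr rfl fun k _ => by
    rw [← pow_mul, ← pow_mul, mul_comm]

lemma aTr_sq (hK : ∀ a : K, a ^ 2 ^ n = a) (a : K) :
    (aTr n a) ^ 2 = aTr n a := by
  rw [← aTr_sq_eq]
  have h1 : aTr n (a ^ 2) = ∑ k ∈ Finset.range n, a ^ 2 ^ (k + 1) := by
    refine Finset.sum_congr rfl fun k _ => ?_
    rw [← pow_mul, ← pow_succ']
  have h2 : (∑ k ∈ Finset.range n, a ^ 2 ^ (k + 1)) + a ^ 2 ^ 0 =
      ∑ k ∈ Finset.range (n + 1), a ^ 2 ^ k :=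
    (Finset.sum_range_succ' (fun k => a ^ 2 ^ k) n).symm
  have h3 : (∑ k ∈ Finset.range (n + 1), a ^ 2 ^ k) =
      (∑ k ∈ Finset.range n, a ^ 2 ^ k) + a ^ 2 ^ n := Finset.sum_range_succ _ n
  have := h2.trans h3
  rw [hK a, pow_zero, pow_one] at this
  have := add_right_cancel this
  rw [h1, this]; rfl

lemma pow_two_pow_self {t : K} (ht : t ^ 2 = t) (k : ℕ) : t ^ 2 ^ k = t := by
  induction k with
  | zero => simp
  | succ k ih => rw [pow_succ, pow_mul, ih, ht]

lemma aTr_mul_const {t : K} (ht : t ^ 2 = t) (y : K) :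
    aTr n (t * y) = t * aTr n y := by
  simp only [aTr, Finset.mul_sum]
  exact Finset.sum_congr rfl fun k _ => by rw [mul_pow, pow_two_pow_self ht]

lemma aTr_const (hne : Even n) {t : K} (ht : t ^ 2 = t) : aTr n t = 0 := by
  simp only [aTr]
  rw [Finset.sum_congr rfl fun k _ => pow_two_pow_self ht k,
    Finset.sum_const, Finset.card_range, nsmul_eq_mul]
  have : (n : K) = 0 := (CharP.cast_eq_zero_iff K 2 n).2 hne.two_dvd
  rw [this, zero_mul]

end aux

/-- for even `n`, the map `h(x) = x + tr(x^{2^i+1})` is an involution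
on `F_{2^n}`. -/
theorem stmt2 (n i : ℕ) (hn : 0 < n) (hne : Even n) (hi : 0 < i) :
    ∀ x : GaloisField 2 n,
      ((x + aTr n (x ^ (2 ^ i + 1))) +
        aTr n ((x + aTr n (x ^ (2 ^ i + 1))) ^ (2 ^ i + 1))) = x := by
  intro x
  have hK : ∀ a : GaloisField 2 n, a ^ 2 ^ n = a := by
    intro a
    haveI : Fintype (GaloisField 2 n) := Fintype.ofFinite _
    have hc := GaloisField.card 2 n hn.ne'
    rw [Nat.card_eq_fintype_card] at hc
    rw [← hc]
    exact FiniteField.pow_card a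
  set t := aTr n (x ^ (2 ^ i + 1)) with ht_def
  have ht2 : t ^ 2 = t := aTr_sq n hK _
  have hfrob : ∀ a : GaloisField 2 n, aTr n (a ^ 2) = aTr n a := by
    intro a
    rw [aTr_sq_eq, aTr_sq n hK]
  have hfrobpow : ∀ (j : ℕ) (a : GaloisField 2 n), aTr n (a ^ 2 ^ j) = aTr n a := by
    intro j
    induction j with
    | zero => simp
    | succ j ih =>
      intro a
      rw [pow_succ, pow_mul, hfrob, ih]
  have expand : (x + t) ^ (2 ^ i + 1) =
      x ^ (2 ^ i + 1) + t * (x ^ 2 ^ i + x) + t := by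
    rw [pow_add, pow_one, add_pow_char_pow, pow_two_pow_self ht2]
    have : (x ^ 2 ^ i + t) * (x + t)
        = x ^ 2 ^ i * x + t * (x ^ 2 ^ i + x) + t ^ 2 := by ring
    rw [this, ht2, ← pow_succ]
  rw [expand, aTr_add, aTr_add, aTr_mul_const n ht2, aTr_add,
    hfrobpow i x, aTr_const n hne ht2, ← ht_def]
  have h2 : (2 : GaloisField 2 n) = 0 := by
    have := CharP.cast_eq_zero (GaloisField 2 n) 2
    simpa using this
  have hself : ∀ a : GaloisField 2 n, a + a = 0 := fun a => by
    have : a + a = 2 * a := by ring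
    rw [this, h2, zero_mul]
  rw [hself (aTr n x), mul_zero, add_zero, add_zero]
  rw [add_assoc, hself t, add_zero]
end

section
/- Let c ∈ F_{2^d} \ F_2 where d = gcd(2i, n) = gcd(i, n) < n, let a, b ∈ F_{2^n}, and let ε₁, ε₂ ∈ F_2 (viewed as elements 0 or 1 of F_{2^n}). Then the equation (x + a + ε₁)^{2^i+1} + c·(x + ε₂)^{2^i+1} = b has exactly one solution x in F_{2^n}, namely x = (a + ε₁ + c·ε₂)/(c+1) + ( (c/(c+1)²)·( a^{2^i+1} + (a^{2^i} + a + 1)(ε₁ + ε₂) ) + b/(c+1) )^{1/(2^i+1)}, where the (1/(2^i+1))-th power denotes the inverse of the permutation x ↦ x^{2^i+1} of F_{2^n}. -/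
/-- for `c ∈ F_{2^d} \ F_2` with `d = gcd(2i,n) = gcd(i,n) < n`,
`a, b ∈ F_{2^n}` and `ε₁, ε₂ ∈ F_2`, the equation
`(x+a+ε₁)^{2^i+1} + c(x+ε₂)^{2^i+1} = b` has the unique solution given by the
explicit formula, where the `1/(2^i+1)`-th power is the inverse of `x ↦ x^{2^i+1}`. -/
theorem stmt4 (n i d : ℕ) (hn : 0 < n) (hi : 0 < i)
    (hd2 : d = Nat.gcd (2 * i) n) (hd1 : d = Nat.gcd i n) (hdn : d < n)
    (c : GaloisField 2 n) (hc : c ^ 2 ^ d = c) (hc0 : c ≠ 0) (hc1 : c ≠ 1)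
    (a b ε₁ ε₂ : GaloisField 2 n)
    (hε₁ : ε₁ = 0 ∨ ε₁ = 1) (hε₂ : ε₂ = 0 ∨ ε₂ = 1) :
    ∀ x : GaloisField 2 n,
      (x + a + ε₁) ^ (2 ^ i + 1) + c * (x + ε₂) ^ (2 ^ i + 1) = b ↔
      x = (a + ε₁ + c * ε₂) / (c + 1) +
        Function.invFun (fun y : GaloisField 2 n => y ^ (2 ^ i + 1))
          (c / (c + 1) ^ 2 *
            (a ^ (2 ^ i + 1) + (a ^ 2 ^ i + a + 1) * (ε₁ + ε₂)) + b / (c + 1)) := by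
  intro x
  have h2 : (2 : GaloisField 2 n) = 0 := by
    have := CharP.cast_eq_zero (GaloisField 2 n) 2
    exact_mod_cast this
  -- c is fixed by x ↦ x^(2^i)
  have hdi : d ∣ i := hd1 ▸ Nat.gcd_dvd_left i n
  have hfix : ∀ k, c ^ (2 ^ d) ^ k = c := by
    intro k
    induction k with
    | zero => simp
    | succ m ih => rw [pow_succ, pow_mul, ih, hc]
  have hcq : c ^ 2 ^ i = c := by
    obtain ⟨k, hk⟩ := hdi
    rw [hk, pow_mul]
    exact hfix k
  have hcc : c + 1 ≠ 0 := by
    intro h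
    apply hc1
    have : c = -1 := by linear_combination h
    rw [this, neg_eq_iff_add_eq_zero, ← two_mul]
    simp [h2]
  have hc1q : (c + 1) ^ 2 ^ i = c + 1 := by
    rw [add_pow_char_pow, one_pow, hcq]
  -- coprimality of 2^i+1 with 2^n-1
  have hcop : Nat.Coprime (2 ^ i + 1) (2 ^ n - 1) := by
    by_contra hg
    have hg1 : Nat.gcd (2 ^ i + 1) (2 ^ n - 1) ≠ 1 := hg
    set p := (Nat.gcd (2 ^ i + 1) (2 ^ n - 1)).minFac with hpdef
    have hpp : p.Prime := Nat.minFac_prime hg1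
    haveI : Fact p.Prime := ⟨hpp⟩
    have hp1 : p ∣ 2 ^ i + 1 := (Nat.minFac_dvd _).trans (Nat.gcd_dvd_left _ _)
    have hp2 : p ∣ 2 ^ n - 1 := (Nat.minFac_dvd _).trans (Nat.gcd_dvd_right _ _)
    have hpodd : p ≠ 2 := by
      intro h
      rw [h] at hp1
      have : 2 ∣ 2 ^ i := dvd_pow_self 2 hi.ne'
      omega
    have h2i : (2 : ZMod p) ^ i = -1 := by
      have h0 : ((2 ^ i + 1 : ℕ) : ZMod p) = 0 := (ZMod.natCast_eq_zero_iff _ _).mpr hp1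
      push_cast at h0
      linear_combination h0
    have h2n : (2 : ZMod p) ^ n = 1 := by
      have h1 : (1 : ℕ) ≤ 2 ^ n := Nat.one_le_two_pow
      have h0 : ((2 ^ n - 1 : ℕ) : ZMod p) = 0 := (ZMod.natCast_eq_zero_iff _ _).mpr hp2
      rw [Nat.cast_sub h1] at h0
      push_cast at h0
      linear_combination h0
    have hord2i : orderOf (2 : ZMod p) ∣ 2 * i := by
      apply orderOf_dvd_of_pow_eq_one
      rw [two_mul, pow_add, h2i]
      ring
    have hordn : orderOf (2 : ZMod p) ∣ n := orderOf_dvd_of_pow_eq_one h2n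
    have hordi : orderOf (2 : ZMod p) ∣ i := by
      have := Nat.dvd_gcd hord2i hordn
      rw [← hd2, hd1] at this
      exact this.trans (Nat.gcd_dvd_left i n)
    have h2i1 : (2 : ZMod p) ^ i = 1 := orderOf_dvd_iff_pow_eq_one.mp hordi
    have : ((2 : ℕ) : ZMod p) = 0 := by
      push_cast
      linear_combination h2i - h2i1
    have := (ZMod.natCast_eq_zero_iff _ _).mp this
    exact hpodd ((Nat.prime_dvd_prime_iff_eq hpp Nat.prime_two).mp this)
  -- bijectivity of y ↦ y^(2^i+1)
  set m := 2 ^ i + 1 with hm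
  have hfinj : Function.Injective (fun y : GaloisField 2 n => y ^ m) := by
    intro u v huv
    simp only at huv
    have hm0 : m ≠ 0 := by positivity
    rcases eq_or_ne u 0 with rfl | hu
    · rw [zero_pow hm0, eq_comm, pow_eq_zero_iff hm0] at huv
      exact huv.symm
    rcases eq_or_ne v 0 with rfl | hv
    · rw [zero_pow hm0, pow_eq_zero_iff hm0] at huv
      exact huv
    have hcard : Nat.card (GaloisField 2 n)ˣ = 2 ^ n - 1 := by
      rw [Nat.card_units, GaloisField.card 2 n hn.ne']
    have hcop' : (Nat.card (GaloisField 2 n)ˣ).Coprime m := by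
      rw [hcard]
      exact hcop.symm
    have hu' : Units.mk0 u hu ^ m = Units.mk0 v hv ^ m := by
      ext
      push_cast
      exact huv
    have := (powCoprime hcop').injective hu'
    exact congrArg Units.val this
  have hfbij : Function.Bijective (fun y : GaloisField 2 n => y ^ m) :=
    Finite.injective_iff_bijective.mp hfinj
  have hinv : ∀ z w : GaloisField 2 n, z ^ m = w ↔ z = Function.invFun (fun y : GaloisField 2 n => y ^ m) w := by
    intro z w
    constructor
    · rintro rfl
      exact (Function.leftInverse_invFun hfinj z).symm
    · rintro rfl
      exact Function.invFun_eq (hfbij.surjective w)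
  -- algebra
  set ε : GaloisField 2 n := ε₁ + ε₂ with hεdef
  have hε : ε = 0 ∨ ε = 1 := by
    rcases hε₁ with rfl | rfl <;> rcases hε₂ with rfl | rfl
    · left; rw [hεdef]; ring
    · right; rw [hεdef]; ring
    · right; rw [hεdef]; ring
    · left; rw [hεdef]; linear_combination h2
  set s : GaloisField 2 n := (a + ε₁ + c * ε₂) / (c + 1) with hs
  set t : GaloisField 2 n := (a + ε) / (c + 1) with ht
  have hs' : (c + 1) * s = a + ε₁ + c * ε₂ := by
    rw [hs]; field_simp
  have ht' : (c + 1) * t = a + ε := by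
    rw [ht]; field_simp
  have e1 : x + a + ε₁ = (x + s) + c * t := by
    apply mul_left_cancel₀ hcc
    linear_combination -hs' - c * ht' + c * hεdef + (c * ε₁ - c * ε) * h2
  have e2 : x + ε₂ = (x + s) + t := by
    apply mul_left_cancel₀ hcc
    linear_combination -hs' - ht' + hεdef + (ε₁ - ε + ε₂ - a - ε₁) * h2
  have E : ∀ u v : GaloisField 2 n, (u + v) ^ m = u ^ m + u ^ 2 ^ i * v + u * v ^ 2 ^ i + v ^ m := by
    intro u v
    rw [hm]
    simp only [pow_succ, add_pow_char_pow]
    ring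
  have hcm : c ^ m = c ^ 2 := by rw [hm, pow_succ, hcq, sq]
  have key : (x + a + ε₁) ^ m + c * (x + ε₂) ^ m
      = (c + 1) * ((x + s) ^ m + c * t ^ m) := by
    rw [e1, e2, E (x + s) (c * t), E (x + s) t, mul_pow, mul_pow, hcq, hcm]
    linear_combination (c * t * (x + s) ^ 2 ^ i + c * (x + s) * t ^ 2 ^ i) * h2
  have htm : c * t ^ m = c / (c + 1) ^ 2 * (a ^ m + (a ^ 2 ^ i + a + 1) * ε) := by
    have h1 : t ^ m = (a + ε) ^ m / (c + 1) ^ 2 := by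
      rw [ht, div_pow]
      congr 1
      rw [hm, pow_succ, hc1q, sq]
    have h2' : (a + ε) ^ m = a ^ m + (a ^ 2 ^ i + a + 1) * ε := by
      rcases hε with h | h
      · rw [h]; simp
      · rw [h, E a 1, one_pow, one_pow, mul_one]; ring
    rw [h1, h2']
    field_simp
  -- the chain of equivalences
  have step1 : (x + a + ε₁) ^ m + c * (x + ε₂) ^ m = b ↔
      (x + s) ^ m = c / (c + 1) ^ 2 * (a ^ m + (a ^ 2 ^ i + a + 1) * ε) + b / (c + 1) := by
    rw [key, ← htm]
    constructor
    · intro h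
      have hb : b / (c + 1) = (x + s) ^ m + c * t ^ m := by
        rw [← h]
        field_simp
      rw [hb]
      linear_combination (-(c * t ^ m)) * h2
    · intro h
      rw [h]
      field_simp
      ring_nf
      linear_combination ((c + 1) * c * t ^ m) * h2
  rw [step1, hinv]
  constructor
  · intro h
    linear_combination h - s * h2
  · intro h
    linear_combination h + s * h2
end

section
/- Let c ∈ F_{2^d} \ F_2 with d = gcd(2i, n) = gcd(i, n) < n, let n be even, and let a, b ∈ F_{2^n}. For ε₁, ε₂ ∈ F_2 define S_{ε₁ε₂}(a,b) = {x ∈ F_{2^n} : (x+a+ε₁)^{2^i+1} + c(x+ε₂)^{2^i+1} = b, tr(L(a)·x) = ε₁ + ε₂, tr(x^{2^i+1}) = ε₂} and S'_{ε₁ε₂}(a,b) = {x ∈ F_{2^n} : (x+a+ε₁)^{2^i+1} + c(x+ε₂)^{2^i+1} = b, tr(L(a)·x) = ε₁ + ε₂ + 1, tr(x^{2^i+1}) = ε₂}, where L(a) = a^{2^i} + a^{2^{-i}}. Then: (i) at least one of S_{00}(a,b) and S_{11}(a,b) is empty; (ii) at least one of S_{01}(a,b) and S_{10}(a,b) is empty;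 (iii) at least one of S'_{00}(a,b) and S'_{11}(a,b) is empty; (iv) at least one of S'_{01}(a,b) and S'_{10}(a,b) is empty. -/
/-- The set `S_{ε₁ε₂}(a,b)`; here `L(a) = a^{2^i} + a^{2^{-i}}` with
`a^{2^{-i}} = a^{2^{(n-1)i}}` (inverse Frobenius). -/
def Sset (n i : ℕ) (c a b ε₁ ε₂ : GaloisField 2 n) : Set (GaloisField 2 n) :=
  {x | (x + a + ε₁) ^ (2 ^ i + 1) + c * (x + ε₂) ^ (2 ^ i + 1) = b ∧
       aTr n ((a ^ 2 ^ i + a ^ 2 ^ ((n - 1) * i)) * x) = ε₁ + ε₂ ∧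
       aTr n (x ^ (2 ^ i + 1)) = ε₂}

/-- The set `S'_{ε₁ε₂}(a,b)`. -/
def Sset' (n i : ℕ) (c a b ε₁ ε₂ : GaloisField 2 n) : Set (GaloisField 2 n) :=
  {x | (x + a + ε₁) ^ (2 ^ i + 1) + c * (x + ε₂) ^ (2 ^ i + 1) = b ∧
       aTr n ((a ^ 2 ^ i + a ^ 2 ^ ((n - 1) * i)) * x) = ε₁ + ε₂ + 1 ∧
       aTr n (x ^ (2 ^ i + 1)) = ε₂}

section Aux
variable {F : Type} [Field F] [CharP F 2]

def Tgen (d m : ℕ) (w : F) : F := ∑ k ∈ Finset.range m, w ^ 2 ^ (d * k)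

lemma pow_fix {e : F} {d : ℕ} (he : e ^ 2 ^ d = e) : ∀ j, e ^ 2 ^ (d * j) = e := by
  intro j
  induction j with
  | zero => simp
  | succ j ih => rw [Nat.mul_succ, pow_add, pow_mul, ih, he]

lemma Tgen_add (d m : ℕ) (x y : F) : Tgen d m (x + y) = Tgen d m x + Tgen d m y := by
  unfold Tgen
  rw [← Finset.sum_add_distrib]
  exact Finset.sum_congr rfl fun k _ => add_pow_char_pow ..

lemma Tgen_shift (d m : ℕ) (hfix : ∀ w : F, w ^ 2 ^ (d * m) = w) (w : F) :
    Tgen d m (w ^ 2 ^ d) = Tgen d m w := by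
  have hterm : ∀ k, (w ^ 2 ^ d) ^ 2 ^ (d * k) = w ^ 2 ^ (d * (k + 1)) := by
    intro k
    rw [← pow_mul, ← pow_add, Nat.mul_succ, Nat.add_comm]
  unfold Tgen
  rw [Finset.sum_congr rfl fun k _ => hterm k]
  have h1 := Finset.sum_range_succ' (fun k => w ^ 2 ^ (d * k)) m
  have h2 := Finset.sum_range_succ (fun k => w ^ 2 ^ (d * k)) m
  simp only [Nat.mul_zero, pow_zero, pow_one] at h1 h2
  rw [hfix w] at h2
  exact add_right_cancel (h1.symm.trans h2)

lemma Tgen_pow (d m : ℕ) (hfix : ∀ w : F, w ^ 2 ^ (d * m) = w) (j : ℕ) (w : F) :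
    Tgen d m (w ^ 2 ^ (d * j)) = Tgen d m w := by
  induction j with
  | zero => simp
  | succ j ih =>
      have : w ^ 2 ^ (d * (j + 1)) = (w ^ 2 ^ (d * j)) ^ 2 ^ d := by
        rw [← pow_mul, ← pow_add, Nat.mul_succ]
      rw [this, Tgen_shift d m hfix, ih]

lemma Tgen_const (d m : ℕ) (e : F) (he : e ^ 2 ^ d = e) : Tgen d m e = (m : F) * e := by
  unfold Tgen
  rw [Finset.sum_congr rfl fun k _ => pow_fix he k, Finset.sum_const, Finset.card_range,
    nsmul_eq_mul]

lemma aTr_eq_Tgen (n : ℕ) (x : F) : aTr n x = Tgen 1 n x := by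
  simp [aTr, Tgen]

lemma inj_lemma (d m e : ℕ) (hm : Odd m) (hfix : ∀ w : F, w ^ 2 ^ (d * m) = w)
    (c : F) (hcd : c ^ 2 ^ d = c) (hc1 : c ≠ 1) (a b x z : F)
    (h1 : (x + a) ^ (2 ^ (d * e) + 1) + c * x ^ (2 ^ (d * e) + 1) = b)
    (h2 : (z + a) ^ (2 ^ (d * e) + 1) + c * z ^ (2 ^ (d * e) + 1) = b) : x = z := by
  have h20 : (2 : F) = 0 := by
    have := CharP.cast_eq_zero F 2
    exact_mod_cast this
  by_contra hne
  have hex : ∃ u : F, u ≠ 0 ∧ z = x + u := by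
    refine ⟨x + z, ?_, ?_⟩
    · intro h
      apply hne
      linear_combination h - z * h20
    · have : x + (x + z) = (x + x) + z := by ring
      rw [this, CharTwo.add_self_eq_zero, zero_add]
  obtain ⟨u, hu, rfl⟩ := hex
  have hfr : ∀ v w : F, (v + w) ^ (2 ^ (d * e)) = v ^ (2 ^ (d * e)) + w ^ (2 ^ (d * e)) :=
    fun v w => add_pow_char_pow ..
  have key : (1 + c) * (x * u ^ (2 ^ (d * e)) + x ^ (2 ^ (d * e)) * u
      + u ^ (2 ^ (d * e)) * u) = a * u ^ (2 ^ (d * e)) + a ^ (2 ^ (d * e)) * u := by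
    rw [pow_succ, pow_succ] at h1 h2
    simp only [hfr] at h1 h2
    linear_combination h2 - h1 - (a * u ^ (2 ^ (d * e)) + a ^ (2 ^ (d * e)) * u) * h20
  have hcq : c ^ (2 ^ (d * e)) = c := pow_fix hcd e
  have h1cq : (1 + c) ^ (2 ^ (d * e)) = 1 + c := by rw [hfr, one_pow, hcq]
  have huq : u ^ (2 ^ (d * e)) ≠ 0 := pow_ne_zero _ hu
  have key2 : ((1 + c) * (x / u)) + ((1 + c) * (x / u)) ^ (2 ^ (d * e)) + (1 + c)
      = a / u + (a / u) ^ (2 ^ (d * e)) := by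
    rw [mul_pow, h1cq, div_pow, div_pow]
    field_simp
    ring_nf
    ring_nf at key
    linear_combination key
  have hT := congrArg (Tgen d m) key2
  simp only [Tgen_add, Tgen_pow d m hfix e] at hT
  rw [CharTwo.add_self_eq_zero, CharTwo.add_self_eq_zero, zero_add] at hT
  rw [Tgen_const d m 1 (by rw [one_pow]), Tgen_const d m c hcd] at hT
  have hmF : (m : F) = 1 := by
    obtain ⟨l, hl⟩ := hm
    rw [hl]
    push_cast
    rw [h20]
    ring
  rw [hmF] at hT
  apply hc1
  linear_combination hT - h20

lemma contra_lemma (d m e n : ℕ) (hm : Odd m) (hnE : Even n)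
    (hfix : ∀ w : F, w ^ 2 ^ (d * m) = w) (hfixn : ∀ w : F, w ^ 2 ^ (1 * n) = w)
    (c : F) (hcd : c ^ 2 ^ d = c) (hc1 : c ≠ 1) (a b x y : F)
    (h1 : (x + a) ^ (2 ^ (d * e) + 1) + c * x ^ (2 ^ (d * e) + 1) = b)
    (h2 : (y + 1 + a) ^ (2 ^ (d * e) + 1) + c * (y + 1) ^ (2 ^ (d * e) + 1) = b)
    (h3 : aTr n (x ^ (2 ^ (d * e) + 1)) = 0)
    (h4 : aTr n (y ^ (2 ^ (d * e) + 1)) = 1) : False := by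
  have h20 : (2 : F) = 0 := by
    have := CharP.cast_eq_zero F 2
    exact_mod_cast this
  have hxy : x = y + 1 := inj_lemma d m e hm hfix c hcd hc1 a b x (y + 1) h1 h2
  subst hxy
  -- expand (y+1)^(q+1)
  have hexp : (y + 1) ^ (2 ^ (d * e) + 1)
      = y ^ (2 ^ (d * e) + 1) + (y ^ (2 ^ (d * e)) + (y + 1)) := by
    rw [pow_succ, pow_succ, add_pow_char_pow, one_pow]
    ring
  rw [hexp, aTr_eq_Tgen, Tgen_add, Tgen_add, Tgen_add, ← aTr_eq_Tgen n (y ^ (2 ^ (d*e) + 1)),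
    h4] at h3
  have hyq : Tgen 1 n (y ^ 2 ^ (d * e)) = Tgen 1 n y := by
    have := Tgen_pow 1 n hfixn (d * e) y
    rwa [one_mul] at this
  rw [hyq, Tgen_const 1 n 1 (by rw [one_pow])] at h3
  have hnF : (n : F) = 0 := by
    obtain ⟨l, hl⟩ := hnE
    rw [hl]
    push_cast
    exact CharTwo.add_self_eq_zero _
  rw [hnF] at h3
  have : (0 : F) = 1 := by linear_combination -h3 + (Tgen 1 n y) * h20
  exact one_ne_zero this.symm
end Aux

/-- with `c ∈ F_{2^d} \ F_2`, `d = gcd(2i,n) = gcd(i,n) < n` and `n`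
even, at least one of each of the pairs `S_{00}, S_{11}`; `S_{01}, S_{10}`;
`S'_{00}, S'_{11}`; `S'_{01}, S'_{10}` is empty. -/
theorem stmt5 (n i d : ℕ) (hne : Even n)
    (hd2 : d = Nat.gcd (2 * i) n) (hd1 : d = Nat.gcd i n) (hdn : d < n)
    (c : GaloisField 2 n) (hc : c ^ 2 ^ d = c) (hc0 : c ≠ 0) (hc1 : c ≠ 1)
    (a b : GaloisField 2 n) :
    (Sset n i c a b 0 0 = ∅ ∨ Sset n i c a b 1 1 = ∅) ∧
    (Sset n i c a b 0 1 = ∅ ∨ Sset n i c a b 1 0 = ∅) ∧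
    (Sset' n i c a b 0 0 = ∅ ∨ Sset' n i c a b 1 1 = ∅) ∧
    (Sset' n i c a b 0 1 = ∅ ∨ Sset' n i c a b 1 0 = ∅) := by
  have hn0 : n ≠ 0 := by omega
  letI : Fintype (GaloisField 2 n) := Fintype.ofFinite _
  have hfixn : ∀ w : GaloisField 2 n, w ^ 2 ^ (1 * n) = w := by
    intro w
    rw [one_mul, ← GaloisField.card 2 n hn0, Nat.card_eq_fintype_card]
    exact FiniteField.pow_card w
  have hd0 : 0 < d := by
    rw [hd1]
    exact Nat.gcd_pos_of_pos_right i (by omega)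
  have hdvdi : d ∣ i := hd1 ▸ Nat.gcd_dvd_left i n
  have hdvdn : d ∣ n := hd1 ▸ Nat.gcd_dvd_right i n
  obtain ⟨e, rfl⟩ := hdvdi
  obtain ⟨m, hmn⟩ := hdvdn
  have hm : Odd m := by
    rw [← Nat.not_even_iff_odd]
    rintro ⟨k, hk⟩
    have h2dn : 2 * d ∣ n := ⟨k, by rw [hmn, hk]; ring⟩
    have h2di : 2 * d ∣ 2 * (d * e) := ⟨e, by ring⟩
    have hgd : 2 * d ∣ Nat.gcd (2 * (d * e)) n := Nat.dvd_gcd h2di h2dn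
    rw [← hd2] at hgd
    have := Nat.le_of_dvd hd0 hgd
    omega
  have hfix : ∀ w : GaloisField 2 n, w ^ 2 ^ (d * m) = w := by
    intro w
    rw [← hmn]
    have := hfixn w
    rwa [one_mul] at this
  have h11 : (1 : GaloisField 2 n) + 1 = 0 := CharTwo.add_self_eq_zero 1
  refine ⟨?_, ?_, ?_, ?_⟩
  · by_contra h
    push_neg at h
    obtain ⟨h01, h02⟩ := h
    obtain ⟨x, hx⟩ := h01
    obtain ⟨y, hy⟩ := h02
    simp only [Sset, Set.mem_setOf_eq, add_zero] at hx hy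
    refine contra_lemma d m e n hm hne hfix hfixn c hc hc1 a b x y hx.1 ?_ hx.2.2 hy.2.2
    rw [show (y + 1 + a : GaloisField 2 n) = y + a + 1 from by ring]
    exact hy.1
  · by_contra h
    push_neg at h
    obtain ⟨h01, h02⟩ := h
    obtain ⟨x, hx⟩ := h01
    obtain ⟨y, hy⟩ := h02
    simp only [Sset, Set.mem_setOf_eq, add_zero] at hx hy
    refine contra_lemma d m e n hm hne hfix hfixn c hc hc1 (a + 1) b y x ?_ ?_ hy.2.2 hx.2.2
    · rw [show (y + (a + 1) : GaloisField 2 n) = y + a + 1 from by ring]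
      exact hy.1
    · rw [show (x + 1 + (a + 1) : GaloisField 2 n) = x + a + (1 + 1) from by ring, h11,
        add_zero]
      exact hx.1
  · by_contra h
    push_neg at h
    obtain ⟨h01, h02⟩ := h
    obtain ⟨x, hx⟩ := h01
    obtain ⟨y, hy⟩ := h02
    simp only [Sset', Set.mem_setOf_eq, add_zero] at hx hy
    refine contra_lemma d m e n hm hne hfix hfixn c hc hc1 a b x y hx.1 ?_ hx.2.2 hy.2.2
    rw [show (y + 1 + a : GaloisField 2 n) = y + a + 1 from by ring]
    exact hy.1
  · by_contra h
    push_neg at h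
    obtain ⟨h01, h02⟩ := h
    obtain ⟨x, hx⟩ := h01
    obtain ⟨y, hy⟩ := h02
    simp only [Sset', Set.mem_setOf_eq, add_zero] at hx hy
    refine contra_lemma d m e n hm hne hfix hfixn c hc hc1 (a + 1) b y x ?_ ?_ hy.2.2 hx.2.2
    · rw [show (y + (a + 1) : GaloisField 2 n) = y + a + 1 from by ring]
      exact hy.1
    · rw [show (x + 1 + (a + 1) : GaloisField 2 n) = x + a + (1 + 1) from by ring, h11,
        add_zero]
      exact hx.1
end

section
/- Let n = dm be even with d = gcd(2i, n) = gcd(i, n) < n, and let c ∈ F_{2^d} \ F_2. If m > 3 and 3 ∤ m, then for every w ∈ F_{2^n} \ F_{2^d} the set { 1/c, 1/w^{2^i+1}, w + w^{2^i} } is linearly independent over F_{2^d}. If m > 3 and 3 | m, then for every w ∈ F_{2^n} \ F_{2^{3d}} the set { 1/c, 1/w^{2^i+1}, w + w^{2^i} } is linearly independent over F_{2^d}. -/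
section aux

lemma fix_pow_mul {M : Type*} [Monoid M] (x : M) (a k : ℕ) (h : x ^ 2 ^ a = x) :
    x ^ 2 ^ (a * k) = x := by
  induction k with
  | zero => simp
  | succ k ih => rw [Nat.mul_succ, pow_add, pow_mul, ih, h]

lemma fix_pow_dvd {M : Type*} [Monoid M] (x : M) {a b : ℕ} (h : x ^ 2 ^ a = x) (hab : a ∣ b) :
    x ^ 2 ^ b = x := by
  obtain ⟨k, rfl⟩ := hab
  exact fix_pow_mul x a k h

lemma fix_pow_mod {M : Type*} [Monoid M] (x : M) (a b : ℕ) (ha : x ^ 2 ^ a = x)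
    (hb : x ^ 2 ^ b = x) : x ^ 2 ^ (b % a) = x := by
  have h1 : x ^ 2 ^ b = x ^ 2 ^ (b % a) := by
    conv_lhs => rw [← Nat.div_add_mod b a]
    rw [pow_add, pow_mul, fix_pow_mul x a (b / a) ha]
  rw [← h1, hb]

lemma fix_pow_gcd {M : Type*} [Monoid M] (x : M) : ∀ a b : ℕ, x ^ 2 ^ a = x → x ^ 2 ^ b = x →
    x ^ 2 ^ (Nat.gcd a b) = x := by
  intro a b
  induction a, b using Nat.gcd.induction with
  | H0 n => intro _ h; simpa using h
  | H1 m n hm ih =>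
    intro hm' hn'
    rw [Nat.gcd_rec]
    exact ih (fix_pow_mod x m n hm' hn') hm'

lemma core {F : Type*} [Field F] [CharP F 2] (i : ℕ) (c w a₁ a₂ a₃ : F)
    (hc0 : c ≠ 0) (hw0 : w ≠ 0)
    (hc : c ^ 2 ^ i = c) (h1 : a₁ ^ 2 ^ i = a₁) (h2 : a₂ ^ 2 ^ i = a₂) (h3 : a₃ ^ 2 ^ i = a₃)
    (hw2 : ¬ (w ^ 2 ^ i) ^ 2 ^ i = w) (hw3 : ¬ ((w ^ 2 ^ i) ^ 2 ^ i) ^ 2 ^ i = w)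
    (H : a₁ * (1 / c) + a₂ * (1 / w ^ (2 ^ i + 1)) + a₃ * (w + w ^ 2 ^ i) = 0) :
    a₁ = 0 ∧ a₂ = 0 ∧ a₃ = 0 := by
  have htwo : (2 : F) = 0 := by
    have := CharP.cast_eq_zero F 2
    exact_mod_cast this
  set w1 := w ^ 2 ^ i with hw1def
  set w2 := w1 ^ 2 ^ i with hw2def
  set w3 := w2 ^ 2 ^ i with hw3def
  have hw1 : w1 ≠ 0 := pow_ne_zero _ hw0
  have hw2' : w2 ≠ 0 := pow_ne_zero _ hw1
  have hT : w ^ (2 ^ i + 1) = w1 * w := by rw [pow_add, pow_one]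
  have hTne : w ^ (2 ^ i + 1) ≠ 0 := pow_ne_zero _ hw0
  -- cleared form of H
  have e1 : a₁ * (w1 * w) + a₂ * c + a₃ * c * (w1 * w) * (w + w1) = 0 := by
    rw [hT] at H
    field_simp at H
    linear_combination H
  -- apply Frobenius^i to e1
  have e2 : a₁ * (w2 * w1) + a₂ * c + a₃ * c * (w2 * w1) * (w1 + w2) = 0 := by
    have h := congrArg (fun t : F => t ^ 2 ^ i) e1
    simp only [add_pow_char_pow, mul_pow, h1, h2, h3, hc, zero_pow, ne_eq,
      pow_eq_zero_iff, OfNat.ofNat_ne_zero, false_and, not_false_eq_true] at h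
    rw [zero_pow (by positivity)] at h
    linear_combination h
  have key : (w + w2) * (a₂ + a₃ * (w * w1 * w2)) * c = 0 := by
    linear_combination w2 * e1 + w * e2 - (a₁ * w * w1 * w2 + a₃ * c * w * w1 ^ 2 * w2) * htwo
  have key2 : a₂ + a₃ * (w * w1 * w2) = 0 := by
    rcases mul_eq_zero.mp key with h | h
    · rcases mul_eq_zero.mp h with h' | h'
      · exfalso
        exact hw2 (by linear_combination h' - w * htwo)
      · exact h'
    · exact absurd h hc0
  have ha23 : a₂ = a₃ * (w * w1 * w2) := by
    linear_combination key2 - a₃ * (w * w1 * w2) * htwo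
  have e3 : a₂ = a₃ * (w1 * w2 * w3) := by
    have h := congrArg (fun t : F => t ^ 2 ^ i) ha23
    simp only [mul_pow, h2, h3] at h
    linear_combination h
  have hprod : a₃ * (w1 * w2 * (w + w3)) = 0 := by
    linear_combination ha23 - e3 + (a₃ * w * w1 * w2) * htwo
  have ha3 : a₃ = 0 := by
    by_contra hne
    have h := (mul_eq_zero.mp hprod).resolve_left hne
    have h' := (mul_eq_zero.mp h).resolve_left (mul_ne_zero hw1 hw2')
    exact hw3 (by linear_combination h' - w * htwo)
  have ha2 : a₂ = 0 := by rw [ha23, ha3, zero_mul]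
  refine ⟨?_, ha2, ha3⟩
  have : a₁ * (w1 * w) = 0 := by
    rw [ha2, ha3] at e1
    linear_combination e1
  exact (mul_eq_zero.mp this).resolve_right (mul_ne_zero hw1 hw0)

end aux

/-- let `n = dm` be even with `d = gcd(2i,n) = gcd(i,n) < n` and
`c ∈ F_{2^d} \ F_2`. If `m > 3` with `3 ∤ m` (resp. `3 ∣ m`), then for every
`w ∉ F_{2^d}` (resp. `w ∉ F_{2^{3d}}`) the set `{1/c, 1/w^{2^i+1}, w + w^{2^i}}`
is linearly independent over `F_{2^d} = {a : a^{2^d} = a}`. -/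
theorem stmt6 (n i d m : ℕ) (hnm : n = d * m) (hne : Even n)
    (hd2 : d = Nat.gcd (2 * i) n) (hd1 : d = Nat.gcd i n) (hdn : d < n)
    (c : GaloisField 2 n) (hc : c ^ 2 ^ d = c) (hc0 : c ≠ 0) (hc1 : c ≠ 1) :
    (m > 3 → ¬(3 ∣ m) →
      ∀ w : GaloisField 2 n, ¬(w ^ 2 ^ d = w) →
        ∀ a₁ a₂ a₃ : GaloisField 2 n,
          a₁ ^ 2 ^ d = a₁ → a₂ ^ 2 ^ d = a₂ → a₃ ^ 2 ^ d = a₃ →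
          a₁ * (1 / c) + a₂ * (1 / w ^ (2 ^ i + 1)) + a₃ * (w + w ^ 2 ^ i) = 0 →
          a₁ = 0 ∧ a₂ = 0 ∧ a₃ = 0) ∧
    (m > 3 → 3 ∣ m →
      ∀ w : GaloisField 2 n, ¬(w ^ 2 ^ (3 * d) = w) →
        ∀ a₁ a₂ a₃ : GaloisField 2 n,
          a₁ ^ 2 ^ d = a₁ → a₂ ^ 2 ^ d = a₂ → a₃ ^ 2 ^ d = a₃ →
          a₁ * (1 / c) + a₂ * (1 / w ^ (2 ^ i + 1)) + a₃ * (w + w ^ 2 ^ i) = 0 →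
          a₁ = 0 ∧ a₂ = 0 ∧ a₃ = 0) := by
  have hn0 : n ≠ 0 := by omega
  have hd0 : d ≠ 0 := by
    intro h
    rw [h] at hd1
    exact hn0 (Nat.eq_zero_of_gcd_eq_zero_right hd1.symm)
  have hdi : d ∣ i := hd1 ▸ Nat.gcd_dvd_left i n
  have hdn' : d ∣ n := hd1 ▸ Nat.gcd_dvd_right i n
  have hcard : ∀ x : GaloisField 2 n, x ^ 2 ^ n = x := by
    intro x
    have : Fintype (GaloisField 2 n) := Fintype.ofFinite _
    have h := FiniteField.pow_card x
    rwa [Fintype.card_eq_nat_card, GaloisField.card 2 n hn0] at h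
  -- w^{2^{2i}} = w  →  w^{2^d} = w
  have key2i : ∀ x : GaloisField 2 n, x ^ 2 ^ (2 * i) = x → x ^ 2 ^ d = x := by
    intro x hx
    have := fix_pow_gcd x (2 * i) n hx (hcard x)
    rwa [← hd2] at this
  -- rewrite (x^{2^i})^{2^i} as x^{2^{2i}}
  have pow2i : ∀ x : GaloisField 2 n, (x ^ 2 ^ i) ^ 2 ^ i = x ^ 2 ^ (2 * i) := by
    intro x
    rw [two_mul, pow_add, pow_mul]
  have pow3i : ∀ x : GaloisField 2 n, ((x ^ 2 ^ i) ^ 2 ^ i) ^ 2 ^ i = x ^ 2 ^ (3 * i) := by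
    intro x
    rw [show 3 * i = i + i + i by ring, pow_add, pow_add, pow_mul, pow_mul]
  -- gcd(3i, n) divides 3d
  have hg3d : Nat.gcd (3 * i) n ∣ 3 * d := by
    have h1 : Nat.gcd (3 * i) n ∣ Nat.gcd (3 * i) (3 * n) :=
      Nat.dvd_gcd (Nat.gcd_dvd_left _ _) ((Nat.gcd_dvd_right _ _).trans (dvd_mul_left n 3))
    rwa [Nat.gcd_mul_left, ← hd1] at h1
  constructor
  · -- case 3 ∤ m
    intro hm3 hm3nd w hw a₁ a₂ a₃ h1 h2 h3 H
    have hw0 : w ≠ 0 := by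
      rintro rfl
      exact hw (zero_pow (Nat.pos_of_ne_zero (Nat.pow_eq_zero.not.mpr (by simp))).ne')
    have hgd : Nat.gcd (3 * i) n = d := by
      have hdg : d ∣ Nat.gcd (3 * i) n := Nat.dvd_gcd (hdi.mul_left 3) hdn'
      obtain ⟨k, hk⟩ := hdg
      have hk3 : k ∣ 3 := by
        have : d * k ∣ d * 3 := by rw [← hk, mul_comm d 3]; exact hg3d
        exact (Nat.mul_dvd_mul_iff_left (Nat.pos_of_ne_zero hd0)).mp this
      rcases (Nat.prime_three.eq_one_or_self_of_dvd k hk3) with h | h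
      · rw [hk, h, mul_one]
      · exfalso
        apply hm3nd
        have hgn : d * 3 ∣ d * m := by
          rw [← hnm]
          rw [h] at hk
          exact hk ▸ Nat.gcd_dvd_right (3 * i) n
        exact (Nat.mul_dvd_mul_iff_left (Nat.pos_of_ne_zero hd0)).mp hgn
    refine core i c w a₁ a₂ a₃ hc0 hw0 (fix_pow_dvd c hc hdi) (fix_pow_dvd a₁ h1 hdi)
      (fix_pow_dvd a₂ h2 hdi) (fix_pow_dvd a₃ h3 hdi) ?_ ?_ H
    · intro h
      rw [pow2i] at h
      exact hw (key2i w h)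
    · intro h
      rw [pow3i] at h
      have := fix_pow_gcd w (3 * i) n h (hcard w)
      rw [hgd] at this
      exact hw this
  · -- case 3 ∣ m
    intro hm3 hm3d w hw a₁ a₂ a₃ h1 h2 h3 H
    have hw0 : w ≠ 0 := by
      rintro rfl
      exact hw (zero_pow (Nat.pos_of_ne_zero (Nat.pow_eq_zero.not.mpr (by simp))).ne')
    refine core i c w a₁ a₂ a₃ hc0 hw0 (fix_pow_dvd c hc hdi) (fix_pow_dvd a₁ h1 hdi)
      (fix_pow_dvd a₂ h2 hdi) (fix_pow_dvd a₃ h3 hdi) ?_ ?_ H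
    · intro h
      rw [pow2i] at h
      exact hw (fix_pow_dvd w (key2i w h) ⟨3, by ring⟩)
    · intro h
      rw [pow3i] at h
      have := fix_pow_gcd w (3 * i) n h (hcard w)
      exact hw (fix_pow_dvd w this hg3d)
end

section
/- Let n = 3d with d = gcd(2i, n) = gcd(i, n), let c ∈ F_{2^d} \ F_2, and let w ∈ F_{2^n}^×. Then w + w^{2^i} = c·tr^n_d(w)·(1/c) + nr^n_d(w)·(1/w^{2^i+1}); in particular { 1/c, 1/w^{2^i+1}, w + w^{2^i} } is linearly dependent over F_{2^d}. -/
/-- The relative trace `tr^n_d : F_{2^n} → F_{2^d}` (with `n = d*m`),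
`tr^n_d(x) = Σ_{k=0}^{m-1} x^{2^{dk}}`, computed inside the field. -/
noncomputable def relTr {K : Type} [CommRing K] (d m : ℕ) (x : K) : K :=
  ∑ k ∈ Finset.range m, x ^ 2 ^ (d * k)

/-- The relative norm `nr^n_d : F_{2^n} → F_{2^d}` (with `n = d*m`),
`nr^n_d(x) = Π_{k=0}^{m-1} x^{2^{dk}}`, computed inside the field. -/
noncomputable def relNr {K : Type} [CommRing K] (d m : ℕ) (x : K) : K :=
  ∏ k ∈ Finset.range m, x ^ 2 ^ (d * k)

/-- for `n = 3d` with `d = gcd(2i,n) = gcd(i,n)`, `c ∈ F_{2^d} \ F_2`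
and `w ∈ F_{2^n}^×`, one has
`w + w^{2^i} = c·tr^n_d(w)·(1/c) + nr^n_d(w)·(1/w^{2^i+1})`; in particular
`{1/c, 1/w^{2^i+1}, w + w^{2^i}}` is linearly dependent over `F_{2^d}`. -/
theorem stmt7 (n i d : ℕ) (hi : 0 < i) (hn : n = 3 * d)
    (hd2 : d = Nat.gcd (2 * i) n) (hd1 : d = Nat.gcd i n)
    (c : GaloisField 2 n) (hc : c ^ 2 ^ d = c) (hc0 : c ≠ 0) (hc1 : c ≠ 1)
    (w : GaloisField 2 n) (hw : w ≠ 0) :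
    w + w ^ 2 ^ i = c * relTr d 3 w * (1 / c) + relNr d 3 w * (1 / w ^ (2 ^ i + 1)) ∧
    ∃ a₁ a₂ a₃ : GaloisField 2 n,
      (a₁ ^ 2 ^ d = a₁ ∧ a₂ ^ 2 ^ d = a₂ ∧ a₃ ^ 2 ^ d = a₃) ∧
      ¬(a₁ = 0 ∧ a₂ = 0 ∧ a₃ = 0) ∧
      a₁ * (1 / c) + a₂ * (1 / w ^ (2 ^ i + 1)) + a₃ * (w + w ^ 2 ^ i) = 0 := by
  haveI : Fintype (GaloisField 2 n) := Fintype.ofFinite _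
  have hd0 : d ≠ 0 := by
    intro h
    rw [h] at hd1
    have := (Nat.gcd_eq_zero_iff.mp hd1.symm).1
    omega
  have hn0 : n ≠ 0 := by omega
  have hcard : Fintype.card (GaloisField 2 n) = 2 ^ n := by
    rw [← Nat.card_eq_fintype_card]; exact GaloisField.card 2 n hn0
  have hfix : ∀ (x : GaloisField 2 n) (q : ℕ), x ^ 2 ^ (n * q) = x := by
    intro x q
    rw [pow_mul, ← hcard]
    exact FiniteField.pow_card_pow _ _
  have hred : w ^ 2 ^ i = w ^ 2 ^ (i % n) := by
    conv_lhs => rw [← Nat.div_add_mod i n]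
    rw [pow_add, pow_mul, hfix]
  -- i % n = d * (k % 3) with k % 3 = 1 or 2
  obtain ⟨k, hk⟩ : d ∣ i := hd1 ▸ Nat.gcd_dvd_left i n
  have hk3 : Nat.gcd k 3 = 1 := by
    have h := hd1
    rw [hk, hn, mul_comm 3 d, Nat.gcd_mul_left] at h
    have : d * Nat.gcd k 3 = d * 1 := by omega
    exact Nat.eq_of_mul_eq_mul_left (Nat.pos_of_ne_zero hd0) this
  have hk30 : k % 3 ≠ 0 := by
    intro h
    have h3 : (3 : ℕ) ∣ k := Nat.dvd_of_mod_eq_zero h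
    have := Nat.dvd_gcd h3 (dvd_refl 3)
    rw [hk3] at this
    omega
  have hmod : i % n = d * (k % 3) := by
    rw [hk, hn, mul_comm 3 d, Nat.mul_mod_mul_left]
  have hcase : k % 3 = 1 ∨ k % 3 = 2 := by omega
  -- expand trace and norm
  have hT : relTr d 3 w = w + w ^ 2 ^ d + w ^ 2 ^ (d * 2) := by
    simp [relTr, Finset.sum_range_succ]
  have hN : relNr d 3 w = w * w ^ 2 ^ d * w ^ 2 ^ (d * 2) := by
    simp [relNr, Finset.prod_range_succ]
  have hcc : c * relTr d 3 w * (1 / c) = relTr d 3 w := by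
    rw [mul_comm c, mul_assoc, one_div, mul_inv_cancel₀ hc0, mul_one]
  have hpw1 : w ^ 2 ^ d ≠ 0 := pow_ne_zero _ hw
  have hpw2 : w ^ 2 ^ (d * 2) ≠ 0 := pow_ne_zero _ hw
  have h1 : w + w ^ 2 ^ i = c * relTr d 3 w * (1 / c) + relNr d 3 w * (1 / w ^ (2 ^ i + 1)) := by
    rw [hcc, hT, hN, pow_add, pow_one, hred, hmod]
    rcases hcase with h | h
    · rw [h, mul_one]
      have hre : w * w ^ 2 ^ d * w ^ 2 ^ (d * 2) = w ^ 2 ^ d * w * w ^ 2 ^ (d * 2) := by ring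
      rw [hre, mul_one_div, mul_div_cancel_left₀ _ (mul_ne_zero hpw1 hw)]
      linear_combination -CharTwo.add_self_eq_zero (w ^ 2 ^ (d * 2))
    · rw [h]
      have hre : w * w ^ 2 ^ d * w ^ 2 ^ (d * 2) = w ^ 2 ^ (d * 2) * w * w ^ 2 ^ d := by ring
      rw [hre, mul_one_div, mul_div_cancel_left₀ _ (mul_ne_zero hpw2 hw)]
      linear_combination -CharTwo.add_self_eq_zero (w ^ 2 ^ d)
  refine ⟨h1, c * relTr d 3 w, relNr d 3 w, 1, ⟨?_, ?_, one_pow _⟩, ?_, ?_⟩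
  · -- (c * relTr)^(2^d) = c * relTr
    have hstep : ∀ m : ℕ, (w ^ 2 ^ (d * m) : GaloisField 2 n) ^ 2 ^ d = w ^ 2 ^ (d * (m + 1)) := by
      intro m
      rw [← pow_mul, ← pow_add, Nat.mul_add, Nat.mul_one]
    have h3 : (w ^ 2 ^ (d * 2) : GaloisField 2 n) ^ 2 ^ d = w := by
      rw [hstep]
      have : d * 3 = n * 1 := by omega
      rw [this, hfix]
    have hT' : (relTr d 3 w) ^ 2 ^ d = relTr d 3 w := by
      rw [hT, add_pow_char_pow _ _ 2 d, add_pow_char_pow _ _ 2 d]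
      have h1' : (w : GaloisField 2 n) ^ 2 ^ d = w ^ 2 ^ (d * 1) := by
        have := hstep 0
        simpa using this
      rw [h3]
      have h2' : ((w : GaloisField 2 n) ^ 2 ^ d) ^ 2 ^ d = w ^ 2 ^ (d * 2) := by
        have := hstep 1
        simpa [Nat.mul_one] using this
      rw [h2']
      ring
    rw [mul_pow, hc, hT']
  · -- (relNr)^(2^d) = relNr
    have hstep : ∀ m : ℕ, (w ^ 2 ^ (d * m) : GaloisField 2 n) ^ 2 ^ d = w ^ 2 ^ (d * (m + 1)) := by
      intro m
      rw [← pow_mul, ← pow_add, Nat.mul_add, Nat.mul_one]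
    have h3 : (w ^ 2 ^ (d * 2) : GaloisField 2 n) ^ 2 ^ d = w := by
      rw [hstep]
      have : d * 3 = n * 1 := by omega
      rw [this, hfix]
    rw [hN, mul_pow, mul_pow, h3]
    have h2' : ((w : GaloisField 2 n) ^ 2 ^ d) ^ 2 ^ d = w ^ 2 ^ (d * 2) := by
      have := hstep 1
      simpa [Nat.mul_one] using this
    rw [h2']
    ring
  · intro ⟨_, _, h⟩
    exact one_ne_zero h
  · rw [one_mul, ← h1]
    exact CharTwo.add_self_eq_zero _
end

section
/- Let n = 3d where d is even. Then for every c' ∈ F_{2^d} \ F_2 there exists w ∈ F_{2^n} \ F_{2^d} such that tr^n_d(w) = 0 and nr^n_d(w) = c'. -/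
open Polynomial

lemma key {K : Type} [Field K] [Fintype K] [CharP K 2] (d n : ℕ) (hd : 0 < d) (hn : n = 3*d)
    (hcard : Fintype.card K = 2^n) (c' : K) (hc : c' ^ 2^d = c') (hc0 : c' ≠ 0) :
    ∃ w : K, ¬(w ^ 2^d = w) ∧ w + w ^ 2^d + (w ^ 2^d) ^ 2^d = 0 ∧
      w * w ^ 2^d * ((w ^ 2^d) ^ 2^d) = c' := by
  classical
  set q := 2^d with hq
  have hq1 : 1 < q := Nat.one_lt_two_pow (by omega)
  have hq0 : q ≠ 0 := by omega
  have h2 : (2 : K) = 0 := CharTwo.two_eq_zero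
  have hfrob : ∀ x y : K, (x + y) ^ q = x ^ q + y ^ q := fun x y => add_pow_char_pow ..
  have hq3 : q^3 = Fintype.card K := by
    rw [hcard, hq, hn, ← pow_mul]; ring_nf
  have hnq : 2^n = q^3 := by rw [← hcard]; exact hq3.symm
  have hQ : ∀ x : K, ((x ^ q) ^ q) ^ q = x := by
    intro x
    rw [← pow_mul, ← pow_mul, show q*(q*q) = q^3 from by ring, hq3, FiniteField.pow_card]
  -- step 1: pigeonhole, get a
  obtain ⟨a, ha, hgood⟩ : ∃ a : K, a ^ q = a ∧ ∀ x : K, x ^ q = x → x^3 + a*x ≠ c' := by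
    by_contra hcon
    push_neg at hcon
    set S : Finset K := Finset.univ.filter (fun x => x ^ q = x) with hS
    have h0S : (0:K) ∈ S := by simp [hS, zero_pow hq0]
    have hsub : S ⊆ (S.erase 0).image (fun x => (c' + x^3) * x⁻¹) := by
      intro b hbS
      have hbq : b ^ q = b := by simpa [hS] using hbS
      obtain ⟨x, hx1, hx2⟩ := hcon b hbq
      have hx0 : x ≠ 0 := by
        rintro rfl
        rw [show (0:K)^3 + b*0 = 0 from by ring] at hx2
        exact hc0 hx2.symm
      refine Finset.mem_image.mpr ⟨x, Finset.mem_erase.mpr ⟨hx0, by simp [hS, hx1]⟩, ?_⟩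
      field_simp
      linear_combination hx2 + (c' - b*x) * h2
    have hc1 := Finset.card_le_card hsub
    have hc2 := Finset.card_image_le (s := S.erase 0) (f := fun x => (c' + x^3) * x⁻¹)
    have hc3 := Finset.card_erase_of_mem h0S
    have hc4 : 0 < S.card := Finset.card_pos.mpr ⟨0, h0S⟩
    omega
  -- step 2: root of X^3 + aX + c' in K
  obtain ⟨w, hw⟩ : ∃ w : K, w^3 + a*w + c' = 0 := by
    -- the subfield F of elements fixed by x ↦ x^q
    let F : Subfield K :=
    { carrier := {x | x ^ q = x}
      zero_mem' := by simp [zero_pow hq0]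
      one_mem' := by simp
      add_mem' := by
        intro x y hx hy
        simp only [Set.mem_setOf_eq] at *
        rw [hfrob, hx, hy]
      mul_mem' := by
        intro x y hx hy
        simp only [Set.mem_setOf_eq] at *
        rw [mul_pow, hx, hy]
      neg_mem' := by
        intro x hx
        simpa [CharTwo.neg_eq] using hx
      inv_mem' := by
        intro x hx
        simp only [Set.mem_setOf_eq] at *
        rw [inv_pow, hx] }
    haveI : Fintype F := Fintype.ofFinite F
    -- splitting facts in K
    have hbigne : (X ^ (2^n) - X : K[X]) ≠ 0 := by
      rw [← hcard]
      exact FiniteField.X_pow_card_sub_X_ne_zero K Fintype.one_lt_card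
    have hbigsplits : Splits (X ^ (2^n) - X : K[X]) := by
      rw [splits_iff_card_roots, ← hcard, FiniteField.roots_X_pow_card_sub_X,
        FiniteField.X_pow_card_sub_X_natDegree_eq K Fintype.one_lt_card, ← Finset.card_def,
        Finset.card_univ]
    -- q - 1 divides 2^n - 1, hence polynomial divisibility
    have hdvd : (X ^ q - X : K[X]) ∣ X ^ (2^n) - X := by
      obtain ⟨k, hk⟩ : q - 1 ∣ 2^n - 1 := by
        rw [hnq]
        simpa using Nat.sub_dvd_pow_sub_pow q 1 3
      have e1 : (X ^ q - X : K[X]) = (X^(q-1) - 1) * X := by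
        rw [sub_mul, one_mul, ← pow_succ, show q - 1 + 1 = q from by omega]
      have e2 : (X ^ (2^n) - X : K[X]) = (X^(2^n - 1) - 1) * X := by
        have h1 : 0 < 2^n := by positivity
        rw [sub_mul, one_mul, ← pow_succ, show 2^n - 1 + 1 = 2^n from by omega]
      rw [e1, e2]
      apply mul_dvd_mul_right
      rw [hk, pow_mul]
      simpa using sub_dvd_pow_sub_pow (X^(q-1) : K[X]) 1 k
    -- card F = q
    have hsep : (X ^ q - X : K[X]).Separable :=
      galois_poly_separable 2 q ⟨2^(d-1), by rw [hq, ← pow_succ']; congr 1; omega⟩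
    have hsp : Splits (X ^ q - X : K[X]) :=
      hbigsplits.of_dvd hbigne hdvd
    have hFcard : Fintype.card F = q := by
      have hne : (X ^ q - X : K[X]) ≠ 0 := FiniteField.X_pow_card_sub_X_ne_zero K hq1
      have hcr := card_rootSet_eq_natDegree (K := K) hsep
        (by rwa [Algebra.algebraMap_self, Polynomial.map_id])
      rw [FiniteField.X_pow_card_sub_X_natDegree_eq K hq1] at hcr
      rw [← hcr]
      apply Fintype.card_congr
      apply Equiv.subtypeEquivRight
      intro x
      rw [mem_rootSet]
      simp only [map_sub, aeval_X_pow, aeval_X, sub_eq_zero]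
      exact ⟨fun h => ⟨hne, h⟩, fun h => h.2⟩
    -- the cubic over F
    set a₀ : F := ⟨a, ha⟩ with ha₀
    set c₀ : F := ⟨c', hc⟩ with hc₀
    set f₀ : Polynomial F := X^3 + C a₀ * X + C c₀ with hf₀
    have hmon : f₀.Monic := by
      unfold f₀
      monicity!
    have hdeg : f₀.natDegree = 3 := by
      unfold f₀
      compute_degree!
    have hirr : Irreducible f₀ := by
      rw [hmon.irreducible_iff_roots_eq_zero_of_degree_le_three (by omega) (by omega)]
      rw [Multiset.eq_zero_iff_forall_notMem]
      intro r hr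
      have hroot : f₀.eval r = 0 := (mem_roots hmon.ne_zero).1 hr
      have : r.val^3 + a * r.val + c' = 0 := by
        have := congrArg (F.subtype) hroot
        simpa [hf₀, ha₀, hc₀] using this
      exact hgood r.val r.2 (by linear_combination this - c' * h2)
    haveI : Fact (Irreducible f₀) := ⟨hirr⟩
    -- the adjoin-root field has cardinality q^3 = 2^n
    set L := AdjoinRoot f₀ with hL
    let pb : PowerBasis F L := AdjoinRoot.powerBasis hmon.ne_zero
    haveI : Fintype L := Module.fintypeOfFintype pb.basis
    have hLcard : Fintype.card L = 2^n := by
      rw [Module.card_fintype pb.basis, hFcard, Fintype.card_fin]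
      rw [show pb.dim = f₀.natDegree from rfl, hdeg, hnq]
    -- minpoly of the root is f₀ and divides X^(2^n) - X
    set r : L := AdjoinRoot.root f₀ with hr
    have haev : (aeval r) f₀ = 0 := by
      rw [aeval_def, AdjoinRoot.algebraMap_eq]
      exact AdjoinRoot.eval₂_root f₀
    have hmin : minpoly F r = f₀ := (minpoly.eq_of_irreducible_of_monic hirr haev hmon).symm
    have hdvd₀ : f₀ ∣ (X ^ (2^n) - X : Polynomial F) := by
      rw [← hmin]
      apply minpoly.dvd
      rw [map_sub, aeval_X_pow, aeval_X, sub_eq_zero, ← hLcard]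
      exact FiniteField.pow_card r
    -- transport to K and find a root
    have hdvdK : (X^3 + C a * X + C c' : K[X]) ∣ (X ^ (2^n) - X : K[X]) := by
      have := Polynomial.map_dvd (F.subtype) hdvd₀
      simpa [hf₀, ha₀, hc₀, Polynomial.map_add, Polynomial.map_mul, Polynomial.map_pow] using this
    have hsplitsf : Splits (X^3 + C a * X + C c' : K[X]) :=
      hbigsplits.of_dvd hbigne hdvdK
    have hdegf : (X^3 + C a * X + C c' : K[X]).degree ≠ 0 := by
      have : (X^3 + C a * X + C c' : K[X]).natDegree = 3 := by compute_degree!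
      rw [degree_eq_natDegree (by intro h; simp [h] at this), this]
      norm_num
    obtain ⟨w, hw⟩ := hsplitsf.exists_eval_eq_zero hdegf
    refine ⟨w, ?_⟩
    simpa using hw
  -- step 3: the algebra
  obtain ⟨u, hu⟩ : ∃ u, u = w ^ q := ⟨_, rfl⟩
  obtain ⟨v, hv⟩ : ∃ v, v = u ^ q := ⟨_, rfl⟩
  have hwv : v ^ q = w := by rw [hv, hu]; exact hQ w
  have hEw : w^3 + a*w + c' = 0 := hw
  have hEu : u^3 + a*u + c' = 0 := by
    have := congrArg (fun z => z ^ q) hEw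
    rw [hfrob, hfrob, mul_pow, ← pow_mul, mul_comm 3 q, pow_mul, ha, hc, zero_pow hq0] at this
    rw [← hu] at this
    exact this
  have hEv : v^3 + a*v + c' = 0 := by
    have := congrArg (fun z => z ^ q) hEu
    rw [hfrob, hfrob, mul_pow, ← pow_mul, mul_comm 3 q, pow_mul, ha, hc, zero_pow hq0] at this
    rw [← hv] at this
    exact this
  have hwu : w ≠ u := by
    intro h
    exact hgood w (by rw [← hu]; exact h.symm) (by linear_combination hEw - c' * h2)
  have huv : u ≠ v := by
    intro h
    apply hwu
    rw [← hwv, ← h, ← hv]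
    exact h.symm
  have hwv' : w ≠ v := by
    intro h
    apply hwu
    rw [hu, h, hwv]
    exact h.symm
  -- the symmetric function identities
  have hA1 : w^2 + w*u + u^2 + a = 0 := by
    have hne : w - u ≠ 0 := sub_ne_zero.mpr hwu
    have hkey : (w - u) * (w^2 + w*u + u^2 + a) = 0 := by linear_combination hEw - hEu
    rcases mul_eq_zero.mp hkey with h | h
    · exact absurd h hne
    · exact h
  have hA2 : u^2 + u*v + v^2 + a = 0 := by
    have hne : u - v ≠ 0 := sub_ne_zero.mpr huv
    have hkey : (u - v) * (u^2 + u*v + v^2 + a) = 0 := by linear_combination hEu - hEv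
    rcases mul_eq_zero.mp hkey with h | h
    · exact absurd h hne
    · exact h
  have hs : w + u + v = 0 := by
    have hne : w - v ≠ 0 := sub_ne_zero.mpr hwv'
    have hkey : (w - v) * (w + u + v) = 0 := by linear_combination hA1 - hA2
    rcases mul_eq_zero.mp hkey with h | h
    · exact absurd h hne
    · exact h
  refine ⟨w, ?_, ?_, ?_⟩
  · exact fun h => hwu (hu.trans h).symm
  · rw [← hu, ← hv]
    exact hs
  · rw [← hu, ← hv]
    linear_combination w*u*hs - hEw - w*hA1 + (w^3 + a*w) * h2

/-- for `n = 3d` with `d` even, every `c' ∈ F_{2^d} \ F_2` is the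
relative norm of some `w ∈ F_{2^n} \ F_{2^d}` of relative trace zero. -/
theorem stmt9 (n d : ℕ) (hd : 0 < d) (hde : Even d) (hn : n = 3 * d)
    (c' : GaloisField 2 n) (hc : c' ^ 2 ^ d = c') (hc0 : c' ≠ 0) (hc1 : c' ≠ 1) :
    ∃ w : GaloisField 2 n, ¬(w ^ 2 ^ d = w) ∧ relTr d 3 w = 0 ∧ relNr d 3 w = c' := by
  haveI : Fintype (GaloisField 2 n) := Fintype.ofFinite _
  have hcard : Fintype.card (GaloisField 2 n) = 2^n := by
    rw [← Nat.card_eq_fintype_card]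
    exact GaloisField.card 2 n (by omega)
  obtain ⟨w, h1, h2, h3⟩ := key d n hd hn hcard c' hc hc0
  have e2 : ∀ x : GaloisField 2 n, x ^ 2^(d*2) = (x ^ 2^d) ^ 2^d := by
    intro x
    rw [← pow_mul, ← pow_add, show d*2 = d+d from by omega]
  refine ⟨w, h1, ?_, ?_⟩
  · rw [relTr, Finset.sum_range_succ, Finset.sum_range_succ, Finset.sum_range_one]
    rw [mul_zero, mul_one, pow_zero, pow_one, e2]
    exact h2
  · rw [relNr, Finset.prod_range_succ, Finset.prod_range_succ, Finset.prod_range_one]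
    rw [mul_zero, mul_one, pow_zero, pow_one, e2]
    exact h3
end

section
/- Let n = dm and i = dℓ with gcd(m, 2ℓ) = 1 and n > d, and let u be the multiplicative inverse of 2^i + 1 modulo 2^n − 1. Then for every c ∈ F_{2^d} \ F_2, both monomials x^u and x^{2u} = x^{(2^{im}+1)/(2^i+1)} are PcN functions on F_{2^n} (i.e., their c-differential uniformity equals 1). -/
/-- The `c`-differential uniformity of `F`. -/
noncomputable def cDelta {K : Type} [Field K] (c : K) (F : K → K) : ℕ :=
  sSup { k : ℕ | ∃ a b : K, (c = 1 → a ≠ 0) ∧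
    k = Nat.card {x : K // F (x + a) + c * F x = b} }

/-- with `n = dm`, `i = dℓ`, `gcd(m, 2ℓ) = 1`, `n > d`, and `u` the
inverse of `2^i + 1` mod `2^n - 1`, the monomials `x^u` and
`x^{2u} = x^{(2^{im}+1)/(2^i+1)}` are PcN on `F_{2^n}` for every
`c ∈ F_{2^d} \ F_2`. -/
theorem stmt13 (n i d m l u : ℕ) (hd : 0 < d) (hnm : n = d * m) (hil : i = d * l)
    (hgcd : Nat.gcd m (2 * l) = 1) (hdn : d < n)
    (hu : (2 ^ i + 1) * u ≡ 1 [MOD 2 ^ n - 1]) :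
    ∀ c : GaloisField 2 n, c ^ 2 ^ d = c → c ≠ 0 → c ≠ 1 →
      cDelta c (fun x : GaloisField 2 n => x ^ u) = 1 ∧
      cDelta c (fun x : GaloisField 2 n => x ^ (2 * u)) = 1 ∧
      cDelta c (fun x : GaloisField 2 n => x ^ ((2 ^ (i * m) + 1) / (2 ^ i + 1))) = 1 := by
  set K := GaloisField 2 n with hK
  intro c hcd hc0 hc1
  -- basic numerics
  have hn2 : 2 ≤ n := by omega
  have hm2 : 2 ≤ m := by
    rcases Nat.lt_or_ge m 2 with h | h
    · interval_cases m <;> omega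
    · exact h
  have hl1 : 1 ≤ l := by
    rcases Nat.eq_zero_or_pos l with h | h
    · rw [h, mul_zero, Nat.gcd_zero_right] at hgcd; omega
    · exact h
  have hmodd : Odd m := by
    have hcop : Nat.Coprime m 2 := Nat.Coprime.coprime_dvd_right (dvd_mul_right 2 l) hgcd
    rcases Nat.even_or_odd m with h | h
    · exfalso
      have h2m : (2 : ℕ) ∣ m := h.two_dvd
      have := Nat.dvd_gcd h2m (dvd_refl 2)
      rw [hcop] at this
      omega
    · exact h
  have hM3 : 3 ≤ 2 ^ n - 1 := by
    have : 4 ≤ 2 ^ n := by calc 4 = 2 ^ 2 := by norm_num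
                                _ ≤ 2 ^ n := Nat.pow_le_pow_right (by norm_num) hn2
    omega
  have hu1 : 1 ≤ u := by
    rcases Nat.eq_zero_or_pos u with h | h
    · exfalso
      subst h
      have h0 : 0 % (2 ^ n - 1) = 1 % (2 ^ n - 1) := by simpa [Nat.ModEq] using hu
      have h1 : (1 : ℕ) % (2 ^ n - 1) = 1 := Nat.mod_eq_of_lt (by omega)
      rw [Nat.zero_mod, h1] at h0
      exact one_ne_zero h0.symm
    · exact h
  -- field facts
  haveI : Fintype K := Fintype.ofFinite K
  have hq : Fintype.card K = 2 ^ n := by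
    rw [← Nat.card_eq_fintype_card, hK, GaloisField.card 2 n (by omega)]
  have h2 : (2 : K) = 0 := CharTwo.two_eq_zero
  have hcyc : ∀ x : K, x ≠ 0 → x ^ (2 ^ n - 1) = 1 := by
    intro x hx
    rw [← hq]; exact FiniteField.pow_card_sub_one_eq_one x hx
  have hpow : ∀ a b : ℕ, 1 ≤ a → 1 ≤ b → a ≡ b [MOD 2 ^ n - 1] → ∀ x : K, x ^ a = x ^ b := by
    have main : ∀ a b : ℕ, 1 ≤ a → a ≤ b → a ≡ b [MOD 2 ^ n - 1] → ∀ x : K, x ^ a = x ^ b := by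
      intro a b ha hab hmod x
      obtain ⟨t, ht⟩ := (Nat.modEq_iff_dvd' hab).mp hmod
      have hb : b = a + (2 ^ n - 1) * t := by omega
      rcases eq_or_ne x 0 with rfl | hx
      · rw [zero_pow (by omega), zero_pow (by omega)]
      · rw [hb, pow_add, pow_mul, hcyc x hx, one_pow, mul_one]
    intro a b ha hb hmod x
    rcases le_total a b with h | h
    · exact main a b ha h hmod x
    · exact (main b a hb h hmod.symm x).symm
  have hid : ∀ t : K, t ^ ((2 ^ i + 1) * u) = t := by
    intro t
    have hpos : 1 ≤ (2 ^ i + 1) * u := Nat.mul_pos (by positivity) hu1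
    have := hpow ((2 ^ i + 1) * u) 1 hpos le_rfl hu t
    simpa using this
  have hΦΨ : ∀ t : K, (t ^ u) ^ (2 ^ i + 1) = t := by
    intro t; rw [← pow_mul, mul_comm]; exact hid t
  have hΨΦ : ∀ t : K, (t ^ (2 ^ i + 1)) ^ u = t := by
    intro t; rw [← pow_mul]; exact hid t
  have e2 : ∀ A B : K, A ^ u = B ↔ A = B ^ (2 ^ i + 1) :=
    fun A B => ⟨fun h => by rw [← h, hΦΨ], fun h => by rw [h, hΨΦ]⟩
  have e5 : ∀ A B : K, A ^ (2 ^ i + 1) = B ↔ A = B ^ u :=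
    fun A B => ⟨fun h => by rw [← h, hΨΦ], fun h => by rw [h, hΦΨ]⟩
  have frobq : ∀ x y : K, (x + y) ^ (2 ^ i) = x ^ (2 ^ i) + y ^ (2 ^ i) := by
    intro x y; exact add_pow_char_pow x y 2 i
  -- fixed points of Frobenius powers
  have hfix : ∀ z : K, z ^ 2 ^ d = z → ∀ k : ℕ, z ^ 2 ^ (d * k) = z := by
    intro z hz k
    induction k with
    | zero => simp
    | succ k ih =>
      have hdk : d * (k + 1) = d * k + d := by ring
      rw [hdk, pow_add, pow_mul, ih, hz]
  -- the key counting lemma for x^u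
  have key : ∀ c' : K, c' + 1 ≠ 0 → c' ^ 2 ^ i = c' → ∀ a b : K,
      Nat.card {x : K // (x + a) ^ u + c' * x ^ u = b} = 1 := by
    intro c' hc1' hci a b
    set q := 2 ^ i with hqdef
    have hcq1 : (c' + 1) ^ q = c' + 1 := by rw [frobq, hci, one_pow]
    set s0 : K := c' * b * (c' + 1)⁻¹ with hs0
    have hs : (c' + 1) * s0 = c' * b := by
      rw [hs0]; rw [mul_comm, mul_assoc, inv_mul_cancel₀ hc1', mul_one]
    have hS : (c' + 1) * s0 ^ q = c' * b ^ q := by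
      have hh := congrArg (· ^ q) hs
      simp only [mul_pow] at hh
      rw [hcq1, hci] at hh
      exact hh
    -- the polynomial identity
    have iden : ∀ y : K, (c' * y + b) ^ (q + 1) + y ^ (q + 1) + b ^ (q + 1)
        = ((c' + 1) * y + s0) ^ (q + 1) + s0 ^ (q + 1) := by
      intro y
      rw [pow_succ, pow_succ, pow_succ, pow_succ, pow_succ]
      rw [frobq (c' * y) b, frobq ((c' + 1) * y) s0]
      rw [mul_pow, mul_pow, hci, hcq1]
      linear_combination (-(y ^ q)) * hs + (-y) * hS
        + (b ^ q * b - s0 ^ q * s0 - c' * (y ^ q) * y) * h2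
    set R : K := a + b ^ (q + 1) + s0 ^ (q + 1) with hR
    set y0 : K := (R ^ u + s0) * (c' + 1)⁻¹ with hy0
    set x0 : K := y0 ^ (q + 1) with hx0
    have hinv : (c' + 1) * y0 = R ^ u + s0 := by
      rw [hy0]; rw [mul_comm, mul_assoc, inv_mul_cancel₀ hc1', mul_one]
    have hiff : ∀ x : K, ((x + a) ^ u + c' * x ^ u = b) ↔ x = x0 := by
      intro x
      set y : K := x ^ u with hy
      have hxy : x = y ^ (q + 1) := by rw [hy]; exact (hΦΨ x).symm
      calc (x + a) ^ u + c' * y = b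
          ↔ (x + a) ^ u = b + c' * y := CharTwo.add_eq_iff_eq_add
        _ ↔ x + a = (b + c' * y) ^ (q + 1) := e2 _ _
        _ ↔ y ^ (q + 1) + a = (c' * y + b) ^ (q + 1) := by
            rw [← hxy, add_comm b (c' * y)]
        _ ↔ ((c' + 1) * y + s0) ^ (q + 1) = R := by
            rw [hR]
            constructor
            · intro h
              linear_combination -(iden y) - h + (y ^ (q + 1) - s0 ^ (q + 1)) * h2
            · intro h
              linear_combination -h - iden y + (y ^ (q + 1) - s0 ^ (q + 1)) * h2
        _ ↔ (c' + 1) * y + s0 = R ^ u := e5 _ _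
        _ ↔ y = y0 := by
            constructor
            · intro h
              apply mul_left_cancel₀ hc1'
              rw [hinv]
              linear_combination h - s0 * h2
            · intro h
              rw [h]
              linear_combination hinv + s0 * h2
        _ ↔ x = x0 := by rw [hy, hx0]; exact e2 _ _
    rw [Nat.card_eq_one_iff_unique]
    constructor
    · constructor
      intro ⟨x, hx⟩ ⟨x', hx'⟩
      have h1 := (hiff x).mp hx
      have h2' := (hiff x').mp hx'
      exact Subtype.ext (h1.trans h2'.symm)
    · exact ⟨⟨x0, (hiff x0).mpr rfl⟩⟩
  -- general cDelta computation
  have final : ∀ F : GaloisField 2 n → GaloisField 2 n,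
      (∀ a b : K, Nat.card {x : K // F (x + a) + c * F x = b} = 1) → cDelta c F = 1 := by
    intro F hall
    unfold cDelta
    have hset : { k : ℕ | ∃ a b : K, (c = 1 → a ≠ 0) ∧
        k = Nat.card {x : K // F (x + a) + c * F x = b} } = {1} := by
      ext k
      simp only [Set.mem_setOf_eq, Set.mem_singleton_iff]
      constructor
      · rintro ⟨a, b, -, rfl⟩; exact hall a b
      · rintro rfl; exact ⟨0, 0, fun h => absurd h hc1, (hall 0 0).symm⟩
    rw [hset, csSup_singleton]
  have hc1' : c + 1 ≠ 0 := by
    intro h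
    apply hc1
    have := CharTwo.add_eq_iff_eq_add.mp h
    simpa using this
  have hci : c ^ 2 ^ i = c := by rw [hil]; exact hfix c hcd l
  -- part 1
  have part1 : cDelta c (fun x : GaloisField 2 n => x ^ u) = 1 := by
    apply final
    intro a b
    exact key c hc1' hci a b
  -- square roots via x ^ 2^(n-1)
  have hsqrt : ∀ z : K, (z ^ 2 ^ (n - 1)) ^ 2 = z := by
    intro z
    rw [← pow_mul]
    have hnn : 2 ^ (n - 1) * 2 = 2 ^ n := by
      rw [← pow_succ]
      congr 1
      omega
    rw [hnn, ← hq]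
    exact FiniteField.pow_card z
  have hsq : ∀ s t : K, s ^ 2 = t ^ 2 ↔ s = t := by
    intro s t
    constructor
    · intro h
      have h3 : (s + t) ^ 2 = 0 := by
        rw [CharTwo.add_sq, h, CharTwo.add_self_eq_zero]
      have h4 : s + t = 0 := by
        exact pow_eq_zero_iff (by norm_num) |>.mp h3
      have := CharTwo.add_eq_iff_eq_add.mp h4
      simpa using this
    · intro h; rw [h]
  set γ : K := c ^ 2 ^ (n - 1) with hγ
  have hγ2 : γ ^ 2 = c := hsqrt c
  have hγi : γ ^ 2 ^ i = γ := by
    rw [hγ, pow_right_comm, hci]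
  have hγ1 : γ + 1 ≠ 0 := by
    intro h
    have hγeq : γ = 1 := by
      have := CharTwo.add_eq_iff_eq_add.mp h
      simpa using this
    apply hc1
    rw [← hγ2, hγeq, one_pow]
  -- part 2
  have part2 : cDelta c (fun x : GaloisField 2 n => x ^ (2 * u)) = 1 := by
    apply final
    intro a b
    set β : K := b ^ 2 ^ (n - 1) with hβ
    have hβ2 : β ^ 2 = b := hsqrt b
    have hstep : ∀ x : K, ((x + a) ^ (2 * u) + c * x ^ (2 * u) = b)
        ↔ ((x + a) ^ u + γ * x ^ u = β) := by
      intro x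
      have hl2 : (x + a) ^ (2 * u) + c * x ^ (2 * u) = ((x + a) ^ u + γ * x ^ u) ^ 2 := by
        rw [mul_comm 2 u, pow_mul, pow_mul, ← hγ2]
        linear_combination (-((x + a) ^ u * γ * x ^ u)) * h2
      rw [hl2, ← hβ2]
      exact hsq _ _
    calc Nat.card {x : K // (x + a) ^ (2 * u) + c * x ^ (2 * u) = b}
        = Nat.card {x : K // (x + a) ^ u + γ * x ^ u = β} :=
          Nat.card_congr (Equiv.subtypeEquivRight hstep)
      _ = 1 := key γ hγ1 hγi a β
  refine ⟨part1, part2, ?_⟩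
  -- part 3: the exponent equals 2u mod 2^n - 1
  set e : ℕ := (2 ^ (i * m) + 1) / (2 ^ i + 1) with he
  have hdvd : (2 ^ i + 1) ∣ (2 ^ (i * m) + 1) := by
    have h1 : ((2 : ℤ) ^ i) ≡ -1 [ZMOD ((2 : ℤ) ^ i + 1)] :=
      Int.modEq_iff_dvd.mpr ⟨-1, by ring⟩
    have h2' : ((2 : ℤ) ^ (i * m)) ≡ -1 [ZMOD ((2 : ℤ) ^ i + 1)] := by
      have := h1.pow m
      rwa [← pow_mul, hmodd.neg_one_pow] at this
    have h3 := Int.modEq_iff_dvd.mp h2'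
    have h4 : ((2 : ℤ) ^ i + 1) ∣ ((2 : ℤ) ^ (i * m) + 1) := by
      have hr : (-1 : ℤ) - 2 ^ (i * m) = -(2 ^ (i * m) + 1) := by ring
      rw [hr, dvd_neg] at h3
      exact h3
    exact_mod_cast h4
  have hemul : e * (2 ^ i + 1) = 2 ^ (i * m) + 1 := Nat.div_mul_cancel hdvd
  have he1 : 1 ≤ e := by
    rcases Nat.eq_zero_or_pos e with h | h
    · exfalso
      rw [h, zero_mul] at hemul
      exact absurd hemul.symm (by positivity)
    · exact h
  have h2n1 : (1 : ℕ) ≡ 2 ^ n [MOD 2 ^ n - 1] :=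
    (Nat.modEq_iff_dvd' (Nat.one_le_pow n 2 (by norm_num))).mpr dvd_rfl
  have h2im : 2 ^ (i * m) ≡ 1 [MOD 2 ^ n - 1] := by
    have him : i * m = n * l := by rw [hil, hnm]; ring
    calc 2 ^ (i * m) = (2 ^ n) ^ l := by rw [him, pow_mul]
      _ ≡ 1 ^ l [MOD 2 ^ n - 1] := (h2n1.symm).pow l
      _ = 1 := one_pow l
  have hcong : e ≡ 2 * u [MOD 2 ^ n - 1] := by
    calc e = e * 1 := (mul_one e).symm
      _ ≡ e * ((2 ^ i + 1) * u) [MOD 2 ^ n - 1] := (Nat.ModEq.mul_left e hu).symm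
      _ = (e * (2 ^ i + 1)) * u := by ring
      _ = (2 ^ (i * m) + 1) * u := by rw [hemul]
      _ ≡ (1 + 1) * u [MOD 2 ^ n - 1] := Nat.ModEq.mul_right u (Nat.ModEq.add_right 1 h2im)
      _ = 2 * u := by ring
  have hfe : (fun x : GaloisField 2 n => x ^ e) = (fun x : GaloisField 2 n => x ^ (2 * u)) := by
    funext x
    exact hpow e (2 * u) he1 (by omega) hcong x
  rw [hfe]
  exact part2
end
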